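/- Let α₁, α₂ ∈ K∞ and let V : ℝⁿ × [0,∞) → [0,∞) satisfy α₁(|x|) ≤ V(x,t) ≤ α₂(|x|) for all x, t. Let γ ∈ K∞ satisfy γ(s) ≤ α₁(α₂⁻¹(s))/2 for all s ≥ 0, and let F : ℝⁿ × ℤ≥0 → ℝⁿ satisfy |F(x,k)| ≤ α₂⁻¹(α₁(|x|)/2) for all x, k. Let p : ℤ≥0 → {0,1}. Define F_p(x,k) = (1 - p(k+1))x + p(k+1)F(x,k). Then V(F_p(x,k), t) - V(x,t) ≤ -p(k+1)γ(V(x,t)) for all x ∈ ℝⁿ, t ≥ 0, k ∈ ℤ≥0. -/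

import Mathlib

/-- A function of class K∞ (viewed on `[0,∞)`): continuous, strictly increasing,
unbounded, and vanishing at `0`. -/
def IsKInf (f : ℝ → ℝ) : Prop :=
  ContinuousOn f (Set.Ici 0) ∧ StrictMonoOn f (Set.Ici 0) ∧ f 0 = 0 ∧
    ∀ M : ℝ, ∃ x, 0 ≤ x ∧ M ≤ f x

/-- Hybrid example from Section 6. With
`α₁(|x|) ≤ V(x,t) ≤ α₂(|x|)`, `γ(s) ≤ α₁(α₂⁻¹(s))/2`,
`|F(x,k)| ≤ α₂⁻¹(α₁(|x|)/2)`, and `p` valued in `{0,1}`, the dynamics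
`F_p(x,k) = (1-p(k+1))x + p(k+1)F(x,k)` satisfies
`V(F_p(x,k),t) - V(x,t) ≤ -p(k+1)γ(V(x,t))`. -/
theorem stmt12 (n : ℕ)
    (F : EuclideanSpace ℝ (Fin n) → ℕ → EuclideanSpace ℝ (Fin n))
    (V : EuclideanSpace ℝ (Fin n) → ℝ → ℝ)
    (α₁ α₂ α₂inv γ : ℝ → ℝ) (hα₁ : IsKInf α₁) (hα₂ : IsKInf α₂) (hγ : IsKInf γ)
    (hinv₂ : ∀ s ≥ (0 : ℝ), 0 ≤ α₂inv s ∧ α₂ (α₂inv s) = s ∧ α₂inv (α₂ s) = s)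
    (hsand : ∀ x t, 0 ≤ t → α₁ ‖x‖ ≤ V x t ∧ V x t ≤ α₂ ‖x‖)
    (hγle : ∀ s ≥ (0 : ℝ), γ s ≤ α₁ (α₂inv s) / 2)
    (hF : ∀ x k, ‖F x k‖ ≤ α₂inv (α₁ ‖x‖ / 2))
    (p : ℕ → ℝ) (hp : ∀ k, p k = 0 ∨ p k = 1) :
    ∀ (x : EuclideanSpace ℝ (Fin n)) (t : ℝ), 0 ≤ t → ∀ k : ℕ,
      V ((1 - p (k + 1)) • x + p (k + 1) • F x k) t - V x t
        ≤ -p (k + 1) * γ (V x t) := by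
  intro x t ht k
  obtain ⟨hα₁c, hα₁m, hα₁0, hα₁u⟩ := hα₁
  obtain ⟨hα₂c, hα₂m, hα₂0, hα₂u⟩ := hα₂
  rcases hp (k + 1) with h0 | h1
  · simp [h0]
  · rw [h1]
    simp only [sub_self, one_smul, zero_smul, zero_add]
    -- basic nonnegativity facts
    have hx0 : (0 : ℝ) ≤ ‖x‖ := norm_nonneg x
    have hα₁x : 0 ≤ α₁ ‖x‖ := by
      rw [← hα₁0]; exact (hα₁m.monotoneOn (le_refl (0 : ℝ)) hx0 hx0)
    have hs : (0 : ℝ) ≤ α₁ ‖x‖ / 2 := by linarith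
    obtain ⟨hinv_nonneg, hinv_eq, _⟩ := hinv₂ _ hs
    -- V(F x k, t) ≤ α₁‖x‖/2
    have hVF : V (F x k) t ≤ α₁ ‖x‖ / 2 := by
      have h1 := (hsand (F x k) t ht).2
      have h2 : α₂ ‖F x k‖ ≤ α₂ (α₂inv (α₁ ‖x‖ / 2)) :=
        hα₂m.monotoneOn (norm_nonneg _) hinv_nonneg (hF x k)
      rw [hinv_eq] at h2
      linarith
    -- V x t facts
    have hV1 : α₁ ‖x‖ ≤ V x t := (hsand x t ht).1
    have hV2 : V x t ≤ α₂ ‖x‖ := (hsand x t ht).2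
    have hVnn : 0 ≤ V x t := le_trans hα₁x hV1
    obtain ⟨hinvV_nn, hinvV_eq, _⟩ := hinv₂ _ hVnn
    -- α₂inv (V x t) ≤ ‖x‖
    have hinvV_le : α₂inv (V x t) ≤ ‖x‖ := by
      by_contra h
      push_neg at h
      have := hα₂m hx0 hinvV_nn h
      rw [hinvV_eq] at this
      linarith
    -- γ (V x t) ≤ α₁‖x‖/2
    have hγV : γ (V x t) ≤ α₁ ‖x‖ / 2 := by
      have h1 := hγle _ hVnn
      have h2 : α₁ (α₂inv (V x t)) ≤ α₁ ‖x‖ :=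
        hα₁m.monotoneOn hinvV_nn hx0 hinvV_le
      linarith
    linarith
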